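/- arXiv:2207.11870 — 4 statements merged into one kernel-verified Lean document; each statement's English description precedes it below -/
import Mathlib

section
/- For each integer n ≥ 2, the pair C_n is a horizontal almost ι_K-complex, and the F₂[U]-linear chain map f_n : C_n → C_{n+1} defined by f_n(a_n)=a_{n+1}, f_n(b_n)=U b_{n+1}, f_n(c_n)=0, f_n(d_n)=0, f_n(x_n)=x_{n+1} is an almost ι_K-local map; hence [C_n] ≤ [C_{n+1}] in 𝔗^U_K. -/
/-!
Algebraic model for horizontal almost `ι_K`-complexes (Kang–Park,
"Torsion in the knot concordance group and cabling").

Conventions.  We work over `F₂ = ℤ/2`.  A bigraded chain complex of finitely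
generated free `F₂[U]`-modules is presented by a finite homogeneous basis
`idx`, a bidegree function `gr : idx → ℤ × ℤ` (Alexander and Maslov gradings),
and a differential matrix `d` over `F₂[U]` (the `j`-th basis vector is sent to
`∑ i, d i j • eᵢ`; matrix multiplication is composition).  The variable `U`
has bidegree `(−1, −2)` and the differential has bidegree `(0, −1)`.
-/

open Polynomial Matrix Kronecker

noncomputable section

/-- The field with two elements. -/
abbrev F2 : Type := ZMod 2

/-- The ring `F₂[U]`. -/
abbrev PolyU : Type := Polynomial F2

/-- The ring `F₂[U, U⁻¹]`. -/
abbrev Laur : Type := LaurentPolynomial F2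

/-- The localization map `F₂[U] → F₂[U, U⁻¹]`. -/
def toL : PolyU →+* Laur := Polynomial.toLaurent

/-- The skew of a bidegree: `(A, M) ↦ (−A, M)`. -/
def skew (p : ℤ × ℤ) : ℤ × ℤ := (-p.1, p.2)

/-- Data of a bigraded complex of finitely generated free `F₂[U]`-modules. -/
structure CxData where
  idx : Type
  [fintype_idx : Fintype idx]
  [dec_idx : DecidableEq idx]
  gr : idx → ℤ × ℤ
  d : Matrix idx idx PolyU

attribute [instance] CxData.fintype_idx CxData.dec_idx

/-- The `U = 0` (hat-flavored) truncation of a matrix over `F₂[U]`. -/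
def hatM {m n : Type} (f : Matrix m n PolyU) : Matrix m n F2 :=
  fun i j => (f i j).coeff 0

/-- `f` is a homogeneous `F₂[U]`-linear map of bidegree `δ` from `C` to `D`:
a monomial `U^k` appearing in the entry `(i, j)` forces
`gr i + k • (−1, −2) = gr j + δ`. -/
def GradedMap (C D : CxData) (δ : ℤ × ℤ) (f : Matrix D.idx C.idx PolyU) : Prop :=
  ∀ (i : D.idx) (j : C.idx) (k : ℕ), (f i j).coeff k ≠ 0 →
    D.gr i + (-(k : ℤ), -2 * (k : ℤ)) = C.gr j + δ

/-- An element (column vector) of `C` is homogeneous of bidegree `δ`. -/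
def Homog (C : CxData) (δ : ℤ × ℤ) (v : Matrix C.idx Unit PolyU) : Prop :=
  ∀ (i : C.idx) (k : ℕ), (v i ()).coeff k ≠ 0 →
    C.gr i + (-(k : ℤ), -2 * (k : ℤ)) = δ

namespace CxData

/-- `C` is a bigraded chain complex: `∂² = 0` and `∂` has bidegree `(0, −1)`. -/
def IsComplex (C : CxData) : Prop :=
  C.d * C.d = 0 ∧ GradedMap C C (0, -1) C.d

/-- The formal derivative `Φ` of the differential with respect to `U`. -/
def Phi (C : CxData) : Matrix C.idx C.idx PolyU :=
  fun i j => derivative (C.d i j)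

/-- The induced differential on the truncation `Ĉ = C/UC`. -/
def dHat (C : CxData) : Matrix C.idx C.idx F2 := hatM C.d

/-- The truncation of `Φ` to `Ĉ`. -/
def PhiHat (C : CxData) : Matrix C.idx C.idx F2 := hatM C.Phi

/-- The localized differential, over `F₂[U, U⁻¹]`. -/
def dL (C : CxData) : Matrix C.idx C.idx Laur := C.d.map toL

end CxData

/-- Chain homotopy (everything is mod 2) between maps `Ĉ → D̂` of truncations. -/
def HatHomotopic (C D : CxData) (f g : Matrix D.idx C.idx F2) : Prop :=
  ∃ H : Matrix D.idx C.idx F2, f + g = D.dHat * H + H * C.dHat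

/-- Chain homotopy between maps `C → D` over `F₂[U]`. -/
def Homotopic (C D : CxData) (f g : Matrix D.idx C.idx PolyU) : Prop :=
  ∃ H : Matrix D.idx C.idx PolyU, f + g = D.d * H + H * C.d

/-- Chain homotopy between maps `U⁻¹C → U⁻¹D` over `F₂[U, U⁻¹]`. -/
def LHomotopic (C D : CxData) (f g : Matrix D.idx C.idx Laur) : Prop :=
  ∃ H : Matrix D.idx C.idx Laur, f + g = D.dL * H + H * C.dL

/-- A matrix on the truncation `Ĉ` is skew-graded: each nonzero entry takes
bidegree `(A, M)` to `(−A, M)`. -/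
def SkewGraded (C : CxData) (f : Matrix C.idx C.idx F2) : Prop :=
  ∀ i j, f i j ≠ 0 → C.gr i = skew (C.gr j)

/-- `f` is a chain homotopy equivalence of the truncation `Ĉ`. -/
def HatHomotopyEquiv (C : CxData) (f : Matrix C.idx C.idx F2) : Prop :=
  f * C.dHat = C.dHat * f ∧
  ∃ g : Matrix C.idx C.idx F2, g * C.dHat = C.dHat * g ∧
    HatHomotopic C C (g * f) 1 ∧ HatHomotopic C C (f * g) 1

/-- The localization `U⁻¹C` is chain homotopy equivalent to `F₂[U, U⁻¹]`
(one generator, zero differential). -/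
def LocalizationTrivial (C : CxData) : Prop :=
  ∃ (f : Matrix Unit C.idx Laur) (g : Matrix C.idx Unit Laur),
    f * C.dL = 0 ∧ C.dL * g = 0 ∧ f * g = 1 ∧
    ∃ H : Matrix C.idx C.idx Laur, 1 + g * f = C.dL * H + H * C.dL

/-- The homology class of the cycle `x` generates the homology of `U⁻¹C`:
the chain map `F₂[U,U⁻¹] → U⁻¹C` sending the generator to `x` is a chain
homotopy equivalence. -/
def GeneratesLocalHomology (C : CxData) (x : Matrix C.idx Unit PolyU) : Prop :=
  C.dL * x.map toL = 0 ∧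
  ∃ p : Matrix Unit C.idx Laur, p * C.dL = 0 ∧ p * x.map toL = 1 ∧
    ∃ H : Matrix C.idx C.idx Laur, 1 + x.map toL * p = C.dL * H + H * C.dL

/-- A pair as in Definition 2.4: a complex together with an involution of the
hat-flavored truncation. -/
structure Hor where
  C : CxData
  iota : Matrix C.idx C.idx F2

/-- `(C, ι)` is a horizontal almost `ι_K`-complex. -/
def IsHorizontal (X : Hor) : Prop :=
  X.C.IsComplex ∧
  LocalizationTrivial X.C ∧
  HatHomotopyEquiv X.C X.iota ∧
  SkewGraded X.C X.iota ∧
  HatHomotopic X.C X.C (X.C.PhiHat * X.iota * X.C.PhiHat * X.iota)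
    (X.iota * X.C.PhiHat * X.iota * X.C.PhiHat) ∧
  HatHomotopic X.C X.C (X.iota * X.iota)
    (1 + X.C.PhiHat * X.iota * X.C.PhiHat * X.iota) ∧
  ∃ f : Matrix X.C.idx X.C.idx PolyU, f * X.C.d = X.C.d * f ∧
    HatHomotopic X.C X.C (hatM f) (X.iota * X.C.PhiHat * X.iota)

/-- The localization `U⁻¹f` of `f` is a chain homotopy equivalence. -/
def LocalizedHomotopyEquiv (C D : CxData) (f : Matrix D.idx C.idx PolyU) : Prop :=
  ∃ g : Matrix C.idx D.idx Laur,
    g * D.dL = C.dL * g ∧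
    LHomotopic C C (g * f.map toL) 1 ∧
    LHomotopic D D (f.map toL * g) 1

/-- An almost `ι_K`-local map from `(C, ι_C)` to `(D, ι_D)`: a bidegree
preserving `F₂[U]`-linear chain map whose localization is a chain homotopy
equivalence and whose truncation homotopy-commutes with the involutions. -/
def AlmostLocalMap (X Y : Hor) (f : Matrix Y.C.idx X.C.idx PolyU) : Prop :=
  GradedMap X.C Y.C (0, 0) f ∧
  f * X.C.d = Y.C.d * f ∧
  LocalizedHomotopyEquiv X.C Y.C f ∧
  HatHomotopic X.C Y.C (Y.iota * hatM f) (hatM f * X.iota)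

/-- `X ≤ Y`: there is an almost `ι_K`-local map from `X` to `Y`. -/
def Le (X Y : Hor) : Prop := ∃ f, AlmostLocalMap X Y f

/-- Almost `ι_K`-local equivalence. -/
def AlmostLocalEquiv (X Y : Hor) : Prop := Le X Y ∧ Le Y X

/-- The tensor product over `F₂[U]` of two complexes. -/
def tensorCx (C D : CxData) : CxData where
  idx := C.idx × D.idx
  gr := fun p => C.gr p.1 + D.gr p.2
  d := C.d ⊗ₖ (1 : Matrix D.idx D.idx PolyU) + (1 : Matrix C.idx C.idx PolyU) ⊗ₖ D.d

/-- The tensor product of pairs, with `ι_{C⊗D} = ι_C ⊗ ι_D + Φι_C ⊗ ι_D Φ`. -/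
def tensorHor (X Y : Hor) : Hor where
  C := tensorCx X.C Y.C
  iota := X.iota ⊗ₖ Y.iota + (X.C.PhiHat * X.iota) ⊗ₖ (Y.iota * Y.C.PhiHat)

/-- The trivial complex `C_O = F₂[U]`, generator in bidegree `(0,0)`, zero
differential, identity involution. -/
def CO : Hor where
  C := { idx := Unit, gr := fun _ => (0, 0), d := 0 }
  iota := 1

/-- The complex `C_E` of the figure-eight knot: generators `a, b, c, d, x`
(indices `0, 1, 2, 3, 4`), with `a, x` in bidegree `(0,0)`, differential
`∂a = Ub`, `∂c = Ud`, `∂b = ∂d = ∂x = 0`, and involution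
`ι(a) = a + x`, `ι(b) = c`, `ι(c) = b`, `ι(d) = d`, `ι(x) = x + d`. -/
def CE : Hor where
  C := { idx := Fin 5
         gr := ![(0, 0), (1, 1), (-1, 1), (0, 2), (0, 0)]
         d := !![0, 0, 0, 0, 0;
                 Polynomial.X, 0, 0, 0, 0;
                 0, 0, 0, 0, 0;
                 0, 0, Polynomial.X, 0, 0;
                 0, 0, 0, 0, 0] }
  iota := !![1, 0, 0, 0, 0;
             0, 0, 1, 0, 0;
             0, 1, 0, 0, 0;
             0, 0, 0, 1, 1;
             1, 0, 0, 0, 1]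

/-- The complex `C_n`: generators `a_n, b_n, c_n, d_n, x_n` (indices
`0, …, 4`), `a_n, x_n` in bidegree `(0,0)`, differential `∂a_n = Uⁿ b_n`,
`∂c_n = Uⁿ d_n`, and involution `ι(a_n) = a_n + x_n`, `ι(b_n) = c_n`,
`ι(c_n) = b_n`, `ι(d_n) = d_n`, `ι(x_n) = x_n`. -/
def Cn (n : ℕ) : Hor where
  C := { idx := Fin 5
         gr := ![(0, 0), ((n : ℤ), 2 * (n : ℤ) - 1), (-(n : ℤ), 2 * (n : ℤ) - 1),
                 (0, 4 * (n : ℤ) - 2), (0, 0)]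
         d := !![0, 0, 0, 0, 0;
                 Polynomial.X ^ n, 0, 0, 0, 0;
                 0, 0, 0, 0, 0;
                 0, 0, Polynomial.X ^ n, 0, 0;
                 0, 0, 0, 0, 0] }
  iota := !![1, 0, 0, 0, 0;
             0, 0, 1, 0, 0;
             0, 1, 0, 0, 0;
             0, 0, 0, 1, 0;
             1, 0, 0, 0, 1]

/-- The dual complex `C* = Hom_{F₂[U]}(C, F₂[U])`: dual basis, negated
gradings, transposed differential. -/
def dualCx (C : CxData) : CxData where
  idx := C.idx
  gr := fun i => -C.gr i
  d := C.dᵀ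

/-- The dual pair `(C*, ι*)`. -/
def dualHor (X : Hor) : Hor where
  C := dualCx X.C
  iota := X.iotaᵀ

/-- `n`-fold tensor power (`0` gives the trivial complex `C_O`). -/
def tensorPow (X : Hor) : ℕ → Hor
  | 0 => CO
  | n + 1 => tensorHor (tensorPow X n) X

/-- The trace map `tr : C ⊗ C* → F₂[U]`. -/
def trMap (C : CxData) : Matrix Unit (C.idx × C.idx) PolyU :=
  fun _ p => if p.1 = p.2 then 1 else 0

/-- The cotrace map `cotr : F₂[U] → C ⊗ C*`. -/
def cotrMap (C : CxData) : Matrix (C.idx × C.idx) Unit PolyU :=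
  fun p _ => if p.1 = p.2 then 1 else 0


/-- The chain map `f_n : C_n → C_{n+1}` with `f_n(a_n) = a_{n+1}`,
`f_n(b_n) = U b_{n+1}`, `f_n(c_n) = f_n(d_n) = 0`, `f_n(x_n) = x_{n+1}`. -/
def fCn : Matrix (Fin 5) (Fin 5) PolyU :=
  !![1, 0, 0, 0, 0;
     0, Polynomial.X, 0, 0, 0;
     0, 0, 0, 0, 0;
     0, 0, 0, 0, 0;
     0, 0, 0, 0, 1]


section KangParkHelpers

open LaurentPolynomial

lemma sum_Cn_idx {M : Type} [AddCommMonoid M] (n : ℕ) (f : (Cn n).C.idx → M) :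
    ∑ i, f i = f (0 : Fin 5) + f (1 : Fin 5) + f (2 : Fin 5) + f (3 : Fin 5) + f (4 : Fin 5) :=
  Fin.sum_univ_five f

lemma laur_add_self (a : Laur) : a + a = 0 := by
  have h : ((1:Laur) + 1) = algebraMap F2 Laur (1 + 1) := by simp
  have h0 : (1:Laur) + 1 = 0 := by rw [h, show (1+1:F2) = 0 from by decide, map_zero]
  calc a + a = (1+1) * a := by ring
    _ = 0 := by rw [h0, zero_mul]

lemma f2mat_add_self {m k : Type} (A : Matrix m k F2) : A + A = 0 := by
  have h : ∀ a : F2, a + a = 0 := by decide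
  ext i j
  exact h _

lemma dHat_Cn (n : ℕ) (hn : 1 ≤ n) : (Cn n).C.dHat = 0 := by
  ext i j
  rw [Matrix.zero_apply]
  fin_cases i <;> fin_cases j <;>
    simp [Cn, CxData.dHat, hatM, Polynomial.coeff_X_pow, Matrix.vecHead, Matrix.vecTail] <;>
    omega

lemma PhiHat_Cn (n : ℕ) (hn : 2 ≤ n) : (Cn n).C.PhiHat = 0 := by
  ext i j
  rw [Matrix.zero_apply]
  fin_cases i <;> fin_cases j <;>
    simp [Cn, CxData.PhiHat, CxData.Phi, hatM, Polynomial.derivative_X_pow,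
      Polynomial.coeff_X_pow, Matrix.vecHead, Matrix.vecTail] <;>
    omega

lemma iota_sq_Cn (n : ℕ) : (Cn n).iota * (Cn n).iota = 1 := by
  ext i j
  rw [Matrix.mul_apply, sum_Cn_idx, Matrix.one_apply]
  fin_cases i <;> fin_cases j <;>
    simp [Cn, Matrix.mul_apply, Fin.sum_univ_five, sum_Cn_idx, Matrix.one_apply,
      Matrix.vecHead, Matrix.vecTail] <;>
    decide

end KangParkHelpers

set_option maxHeartbeats 2000000 in
set_option maxRecDepth 4000 in
/-- For each `n ≥ 2`, the pair `C_n` is a horizontal almost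
`ι_K`-complex, and the `F₂[U]`-linear chain map `f_n : C_n → C_{n+1}` defined
by `f_n(a_n) = a_{n+1}`, `f_n(b_n) = U b_{n+1}`, `f_n(c_n) = 0`,
`f_n(d_n) = 0`, `f_n(x_n) = x_{n+1}` is an almost `ι_K`-local map; hence
`[C_n] ≤ [C_{n+1}]` in `𝔗^U_K`. -/
theorem Cn_isHorizontal_and_le (n : ℕ) (hn : 2 ≤ n) :
    IsHorizontal (Cn n) ∧
    AlmostLocalMap (Cn n) (Cn (n + 1)) fCn ∧
    Le (Cn n) (Cn (n + 1)) := by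
  have hn1 : (1:ℕ) ≤ n := by omega
  have hd0 : (Cn n).C.dHat = 0 := dHat_Cn n hn1
  have hd0' : (Cn (n+1)).C.dHat = 0 := dHat_Cn (n+1) (by omega)
  have hp0 : (Cn n).C.PhiHat = 0 := PhiHat_Cn n hn
  have hi2 : (Cn n).iota * (Cn n).iota = 1 := iota_sq_Cn n
  have halm : AlmostLocalMap (Cn n) (Cn (n + 1)) fCn := by
    dsimp only [AlmostLocalMap, Cn]
    dsimp only [Cn] at hd0 hd0'
    refine ⟨?_, ?_, ?_, ?_⟩
    · -- graded
      intro i j k h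
      fin_cases i <;> fin_cases j <;>
        simp [fCn, Cn, Polynomial.coeff_X_pow, Polynomial.coeff_one, Polynomial.coeff_X,
          Matrix.vecHead, Matrix.vecTail] at h ⊢ <;>
      · first
        | (subst h; constructor <;> push_cast <;> ring)
        | omega
    · -- chain map
      ext i j : 1
      fin_cases i <;> fin_cases j <;>
        simp [fCn, Cn, Matrix.mul_apply, Fin.sum_univ_five, sum_Cn_idx, Matrix.vecHead, Matrix.vecTail,
          pow_succ] <;>
        ring
    · -- localized homotopy equivalence
      refine ⟨!![1,0,0,0,0; 0, LaurentPolynomial.T (-1:ℤ),0,0,0; 0,0,0,0,0;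
                 0,0,0,0,0; 0,0,0,0,1], ?_, ?_, ?_⟩
      · ext i j : 1
        fin_cases i <;> fin_cases j <;>
          simp [fCn, Cn, CxData.dL, toL, Matrix.mul_apply, Fin.sum_univ_five, sum_Cn_idx,
            Matrix.map_apply, Matrix.vecHead, Matrix.vecTail,
            Polynomial.toLaurent_X_pow, pow_succ, Matrix.vecMul, dotProduct, -LaurentPolynomial.T_mul,
            ← LaurentPolynomial.T_add] <;>
          (try (congr 1 <;> push_cast <;> ring)) <;>
        (try (rw [LaurentPolynomial.T_zero])) <;>
          (try (rw [LaurentPolynomial.T_zero]))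
      · refine ⟨!![0,0,0,0,0;0,0,0,0,0;0,0,0,LaurentPolynomial.T (-(n:ℤ)),0;
                   0,0,0,0,0;0,0,0,0,0], ?_⟩
        ext i j : 1
        fin_cases i <;> fin_cases j <;>
          simp [fCn, Cn, CxData.dL, toL, Matrix.mul_apply, Fin.sum_univ_five, sum_Cn_idx,
            Matrix.map_apply, Matrix.one_apply, Matrix.vecHead, Matrix.vecTail,
            Polynomial.toLaurent_X_pow, pow_succ, Matrix.vecMul, dotProduct, -LaurentPolynomial.T_mul,
            ← LaurentPolynomial.T_add, laur_add_self] <;>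
          (try (congr 1 <;> push_cast <;> ring)) <;>
        (try (rw [LaurentPolynomial.T_zero])) <;>
          (try (rw [LaurentPolynomial.T_zero]))
      · refine ⟨!![0,0,0,0,0;0,0,0,0,0;0,0,0,LaurentPolynomial.T (-((n:ℤ)+1)),0;
                   0,0,0,0,0;0,0,0,0,0], ?_⟩
        ext i j : 1
        fin_cases i <;> fin_cases j <;>
          simp [fCn, Cn, CxData.dL, toL, Matrix.mul_apply, Fin.sum_univ_five, sum_Cn_idx,
            Matrix.map_apply, Matrix.one_apply, Matrix.vecHead, Matrix.vecTail,
            Polynomial.toLaurent_X_pow, pow_succ, Matrix.vecMul, dotProduct, -LaurentPolynomial.T_mul,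
            ← LaurentPolynomial.T_add, laur_add_self] <;>
          (try (congr 1 <;> push_cast <;> ring)) <;>
        (try (rw [LaurentPolynomial.T_zero])) <;>
          (try (rw [LaurentPolynomial.T_zero]))
    · -- hat commutation with iota
      refine ⟨0, ?_⟩
      rw [hd0, hd0']
      have hf : hatM fCn = !![1,0,0,0,0; 0,0,0,0,0; 0,0,0,0,0; 0,0,0,0,0; 0,0,0,0,1] := by
        ext i j : 1
        fin_cases i <;> fin_cases j <;>
          simp [hatM, fCn, Polynomial.coeff_one, Polynomial.coeff_X,
            Matrix.vecHead, Matrix.vecTail]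
      rw [hf]
      erw [Matrix.zero_mul, add_zero]
      ext i j : 1
      erw [Matrix.zero_apply]
      fin_cases i <;> fin_cases j <;>
        simp [Cn, Matrix.mul_apply, Fin.sum_univ_five, sum_Cn_idx,
          Matrix.vecHead, Matrix.vecTail] <;>
        decide
  refine ⟨⟨⟨?_, ?_⟩, ?_, ?_, ?_, ?_, ?_, ?_⟩, halm, ⟨fCn, halm⟩⟩
  · -- d² = 0
    ext i j : 1
    simp only [Matrix.mul_apply, sum_Cn_idx, Matrix.zero_apply]
    fin_cases i <;> fin_cases j <;>
      simp [Cn, Matrix.mul_apply, Fin.sum_univ_five, sum_Cn_idx, Matrix.vecHead, Matrix.vecTail]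
  · -- graded differential
    intro i j k h
    fin_cases i <;> fin_cases j <;>
      simp [Cn, Polynomial.coeff_X_pow, Matrix.vecHead, Matrix.vecTail] at h ⊢ <;>
    · subst h
      constructor <;> push_cast <;> ring
  · -- localization trivial
    refine ⟨fun _ j => ![0,0,0,0,(1:Laur)] j, fun i _ => ![0,0,0,0,(1:Laur)] i,
      ?_, ?_, ?_, ?_⟩
    · ext i j : 1
      erw [Matrix.mul_apply, sum_Cn_idx, Matrix.zero_apply]
      fin_cases j <;>
        simp [Cn, CxData.dL, toL, Matrix.mul_apply, Fin.sum_univ_five, sum_Cn_idx,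
          Matrix.map_apply, Matrix.vecHead, Matrix.vecTail, Polynomial.toLaurent_X_pow]
    · ext i j : 1
      erw [Matrix.mul_apply, sum_Cn_idx, Matrix.zero_apply]
      fin_cases i <;>
        simp [Cn, CxData.dL, toL, Matrix.mul_apply, Fin.sum_univ_five, sum_Cn_idx,
          Matrix.map_apply, Matrix.vecHead, Matrix.vecTail, Polynomial.toLaurent_X_pow]
    · ext i j : 1
      show ∑ k : Fin 5, ![0,0,0,0,(1:Laur)] k * ![0,0,0,0,(1:Laur)] k
        = (1 : Matrix Unit Unit Laur) i j
      simp [Fin.sum_univ_five, sum_Cn_idx, Matrix.one_apply]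
    · refine ⟨!![0, LaurentPolynomial.T (-(n:ℤ)), 0,0,0; 0,0,0,0,0;
                 0,0,0, LaurentPolynomial.T (-(n:ℤ)),0; 0,0,0,0,0; 0,0,0,0,0], ?_⟩
      ext i j : 1
      erw [Matrix.add_apply, Matrix.add_apply, Matrix.mul_apply, Matrix.mul_apply, Matrix.mul_apply]
      simp only [sum_Cn_idx, Fin.sum_univ_five, Matrix.one_apply]
      erw [sum_Cn_idx]
      fin_cases i <;> fin_cases j <;>
        simp [Cn, CxData.dL, toL, Matrix.mul_apply, Fin.sum_univ_five, sum_Cn_idx,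
          Matrix.map_apply, Matrix.one_apply, Matrix.vecHead, Matrix.vecTail,
          Polynomial.toLaurent_X_pow, pow_succ, Matrix.vecMul, dotProduct, -LaurentPolynomial.T_mul,
          ← LaurentPolynomial.T_add, laur_add_self] <;>
        (try (congr 1 <;> push_cast <;> ring)) <;>
        (try (rw [LaurentPolynomial.T_zero]))
  · -- iota is a hat homotopy equivalence
    refine ⟨by rw [hd0]; simp [Matrix.mul_zero, Matrix.zero_mul],
      (Cn n).iota, by rw [hd0]; simp [Matrix.mul_zero, Matrix.zero_mul],
      ⟨0, ?_⟩, ⟨0, ?_⟩⟩ <;>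
    · rw [hd0, hi2, f2mat_add_self]
      simp
  · -- skew graded
    intro i j h
    fin_cases i <;> fin_cases j <;>
      simp [Cn, skew, Matrix.vecHead, Matrix.vecTail] at h ⊢
  · -- Phi iota Phi iota homotopy
    refine ⟨0, ?_⟩
    rw [hd0, hp0]
    simp
  · -- iota squared
    refine ⟨0, ?_⟩
    rw [hd0, hp0, hi2]
    simp [f2mat_add_self]
  · -- the map homotopic to iota Phi iota
    refine ⟨0, by simp, 0, ?_⟩
    rw [hd0, hp0]
    simp
    ext i j : 1
    simp [hatM]


end
end

section
/- For each integer n ≥ 2, there exists an almost ι_K-local map from the trivial complex C_O to C_n, but there is no almost ι_K-local map from C_n to C_O; consequently [C_O] < [C_n] in 𝔗^U_K, i.e., [C_O] ≤ [C_n] and [C_O] ≠ [C_n]. -/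
/-!
Algebraic model for horizontal almost `ι_K`-complexes (Kang–Park,
"Torsion in the knot concordance group and cabling").

Conventions.  We work over `F₂ = ℤ/2`.  A bigraded chain complex of finitely
generated free `F₂[U]`-modules is presented by a finite homogeneous basis
`idx`, a bidegree function `gr : idx → ℤ × ℤ` (Alexander and Maslov gradings),
and a differential matrix `d` over `F₂[U]` (the `j`-th basis vector is sent to
`∑ i, d i j • eᵢ`; matrix multiplication is composition).  The variable `U`
has bidegree `(−1, −2)` and the differential has bidegree `(0, −1)`.
-/

open Polynomial Matrix Kronecker

noncomputable section

/-! ### Auxiliary material for the proof of `CO_lt_Cn` -/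

instance : CharP Laur 2 := charP_of_injective_algebraMap (algebraMap F2 Laur).injective 2
instance : CharP PolyU 2 := charP_of_injective_algebraMap (algebraMap F2 PolyU).injective 2

private lemma mat_add_self {m k : Type} {R : Type} [Ring R] [CharP R 2]
    (A : Matrix m k R) : A + A = 0 := by
  ext i j; exact CharTwo.add_self_eq_zero _

/-- Concrete copy of the differential of `C_n`. -/
private def dCn (n : ℕ) : Matrix (Fin 5) (Fin 5) PolyU :=
  !![0, 0, 0, 0, 0;
     Polynomial.X ^ n, 0, 0, 0, 0;
     0, 0, 0, 0, 0;
     0, 0, Polynomial.X ^ n, 0, 0;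
     0, 0, 0, 0, 0]

/-- Concrete copy of the involution of `C_n`. -/
private def iCn : Matrix (Fin 5) (Fin 5) F2 :=
  !![1, 0, 0, 0, 0;
     0, 0, 1, 0, 0;
     0, 1, 0, 0, 0;
     0, 0, 0, 1, 0;
     1, 0, 0, 0, 1]

/-- Concrete copy of the grading of `C_n`. -/
private def grCn (n : ℕ) : Fin 5 → ℤ × ℤ :=
  ![(0, 0), ((n : ℤ), 2 * (n : ℤ) - 1), (-(n : ℤ), 2 * (n : ℤ) - 1),
    (0, 4 * (n : ℤ) - 2), (0, 0)]

/-- The map `C_O → C_n`, sending the generator to `x_n`. -/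
private def fUp : Matrix (Fin 5) Unit PolyU := fun i _ => if i = 4 then 1 else 0

/-- Localized quasi-inverse `U⁻¹C_n → F₂[U,U⁻¹]`. -/
private def gUp : Matrix Unit (Fin 5) Laur := fun _ j => if j = 4 then 1 else 0

/-- Homotopy witnessing `fUp ∘ gUp ≃ 1` on `U⁻¹C_n`. -/
private def HUp (n : ℕ) : Matrix (Fin 5) (Fin 5) Laur := fun i j =>
  if (i = 0 ∧ j = 1) ∨ (i = 2 ∧ j = 3) then LaurentPolynomial.T (-(n : ℤ)) else 0

private lemma hat_fUp : hatM fUp = fun i (_ : Unit) => if i = 4 then 1 else 0 := by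
  ext i j
  simp only [hatM, fUp]
  split <;> simp

private lemma e1 (n : ℕ) : ∀ (i : Fin 5) (j : Unit) (k : ℕ),
    (fUp i j).coeff k ≠ 0 →
    grCn n i + (-(k : ℤ), -2 * (k : ℤ)) = (fun _ : Unit => ((0 : ℤ), (0 : ℤ))) j + (0, 0) := by
  intro i j k h
  simp only [fUp] at h
  rcases eq_or_ne i 4 with rfl | hne
  · simp only [if_pos, Polynomial.coeff_one, ne_eq, ite_eq_right_iff, one_ne_zero] at h
    have hk : k = 0 := by by_contra hk; simp [hk] at h
    subst hk
    simp [grCn]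
  · simp [hne] at h

private lemma e2 (n : ℕ) :
    fUp * (0 : Matrix Unit Unit PolyU) = dCn n * fUp := by
  rw [Matrix.mul_zero]
  ext i j
  fin_cases i <;>
    simp [dCn, fUp, Matrix.mul_apply, Fin.sum_univ_five]

private lemma e3a (n : ℕ) :
    gUp * (dCn n).map toL = ((0 : Matrix Unit Unit PolyU).map toL) * gUp := by
  have : (0 : Matrix Unit Unit PolyU).map toL = 0 := by
    ext i j; simp [toL]
  rw [this, Matrix.zero_mul]
  ext i j : 2
  fin_cases j <;>
    simp [dCn, gUp, toL, Matrix.mul_apply, Fin.sum_univ_five,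
      Matrix.vecHead, Matrix.vecTail]

private lemma e3b (n : ℕ) :
    gUp * fUp.map toL + 1 =
      ((0 : Matrix Unit Unit PolyU).map toL) * 0 + 0 * ((0 : Matrix Unit Unit PolyU).map toL) := by
  have h1 : gUp * fUp.map toL = 1 := by
    ext i j
    simp [gUp, fUp, toL, Matrix.mul_apply, Fin.sum_univ_five, Matrix.one_apply]
  rw [h1, Matrix.mul_zero, Matrix.zero_mul, add_zero]
  exact mat_add_self 1

private lemma e3c (n : ℕ) :
    fUp.map toL * gUp + 1 =
      (dCn n).map toL * HUp n + HUp n * (dCn n).map toL := by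
  have hT : LaurentPolynomial.T ((n : ℤ)) * LaurentPolynomial.T (-(n : ℤ)) = (1 : Laur) := by
    rw [← LaurentPolynomial.T_add]; simp
  have h2 : (1 : Laur) + 1 = 0 := CharTwo.add_self_eq_zero 1
  ext i j : 2
  fin_cases i <;> fin_cases j <;>
    simp [dCn, fUp, gUp, HUp, toL, Matrix.mul_apply, Fin.sum_univ_five,
      Matrix.one_apply, Matrix.map_apply, hT, h2, Matrix.vecHead, Matrix.vecTail]

private lemma e4 (n : ℕ) :
    iCn * hatM fUp + hatM fUp * (1 : Matrix Unit Unit F2) =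
      hatM (dCn n) * (0 : Matrix (Fin 5) Unit F2)
        + (0 : Matrix (Fin 5) Unit F2) * hatM (0 : Matrix Unit Unit PolyU) := by
  rw [Matrix.mul_zero, Matrix.zero_mul, add_zero, Matrix.mul_one]
  have h1 : iCn * hatM fUp = hatM fUp := by
    ext i j
    fin_cases i <;>
      simp [iCn, hatM, fUp, Matrix.mul_apply, Fin.sum_univ_five]
  rw [h1]
  exact mat_add_self _

/-- For each `n ≥ 2` there exists an almost `ι_K`-local map
from the trivial complex `C_O` to `C_n`, but there is no almost `ι_K`-local
map from `C_n` to `C_O`; consequently `[C_O] < [C_n]` in `𝔗^U_K`, i.e.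
`[C_O] ≤ [C_n]` and `[C_O] ≠ [C_n]`. -/
theorem CO_lt_Cn (n : ℕ) (hn : 2 ≤ n) :
    (∃ f, AlmostLocalMap CO (Cn n) f) ∧
    (¬ ∃ f, AlmostLocalMap (Cn n) CO f) ∧
    Le CO (Cn n) ∧ ¬ AlmostLocalEquiv CO (Cn n) := by
  -- the upward map
  have hup : ∃ f, AlmostLocalMap CO (Cn n) f := by
    refine ⟨fUp, ?_, ?_, ⟨gUp, ?_, ⟨0, ?_⟩, ⟨HUp n, ?_⟩⟩, ⟨0, ?_⟩⟩
    · exact e1 n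
    · exact e2 n
    · exact e3a n
    · exact e3b n
    · exact e3c n
    · exact e4 n
  -- no downward map
  have hdown : ¬ ∃ f, AlmostLocalMap (Cn n) CO f := by
    rintro ⟨f₀, hgr, hchain, ⟨g₀, hg1, hgf, hfg⟩, H₀, hH⟩
    let f : Matrix Unit (Fin 5) PolyU := f₀
    let g : Matrix (Fin 5) Unit Laur := g₀
    let H : Matrix Unit (Fin 5) F2 := H₀
    -- concretely-typed versions of the hypotheses
    have hgr' : ∀ (i : Unit) (j : Fin 5) (k : ℕ), (f i j).coeff k ≠ 0 →
        (fun _ : Unit => ((0 : ℤ), (0 : ℤ))) i + (-(k : ℤ), -2 * (k : ℤ))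
          = grCn n j + (0, 0) := hgr
    -- gradedness kills entries 1, 3 and forces entry 4 to be constant
    have hf1 : f () 1 = 0 := by
      ext k
      by_contra hk
      have h1 := hgr' () 1 k hk
      simp only [grCn, Prod.ext_iff, Prod.fst_add, Prod.snd_add, Matrix.cons_val_one,
        Matrix.head_cons] at h1
      simp at h1
      omega
    have hf3 : f () 3 = 0 := by
      ext k
      by_contra hk
      have h1 := hgr' () 3 k hk
      simp only [grCn, Prod.ext_iff, Prod.fst_add, Prod.snd_add] at h1
      simp at h1
      omega
    have hf4k : ∀ k, k ≠ 0 → (f () 4).coeff k = 0 := by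
      intro k hk
      by_contra hc
      have h1 := hgr' () 4 k hc
      simp only [grCn, Prod.ext_iff, Prod.fst_add, Prod.snd_add] at h1
      simp at h1
      omega
    -- the iota condition forces the constant term of `f () 4` to vanish
    have hH' : (1 : Matrix Unit Unit F2) * hatM f + hatM f * iCn
        = hatM (0 : Matrix Unit Unit PolyU) * H + H * hatM (dCn n) := hH
    have hdCn : hatM (dCn n) = 0 := by
      have hx : ((Polynomial.X ^ n : PolyU)).coeff 0 = 0 := by
        simp [Polynomial.coeff_X_pow]; omega
      ext i j
      fin_cases i <;> fin_cases j <;>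
        simp [dCn, hatM, hx, Matrix.vecHead, Matrix.vecTail]
    have h0 : hatM (0 : Matrix Unit Unit PolyU) = 0 := by
      ext i j; simp [hatM]
    rw [hdCn, h0, Matrix.mul_zero, Matrix.zero_mul, add_zero, Matrix.one_mul] at hH'
    have hf40 : (f () 4).coeff 0 = 0 := by
      have h1 := congrFun (congrFun hH' ()) 0
      simp only [Matrix.add_apply, Matrix.mul_apply, Fin.sum_univ_five,
        Matrix.zero_apply, iCn, hatM] at h1
      simp at h1
      have h2 : (f () 4).coeff 0
          = (f () 0).coeff 0 + ((f () 0).coeff 0 + (f () 4).coeff 0) := by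
        rw [← add_assoc, CharTwo.add_self_eq_zero, zero_add]
      rw [h2, h1]
    have hf4 : f () 4 = 0 := by
      ext k
      rcases Nat.eq_zero_or_pos k with rfl | hk
      · simpa using hf40
      · simpa using hf4k k (by omega)
    -- the localized inverse has vanishing components 0 and 2
    have hg1' : g * ((0 : Matrix Unit Unit PolyU).map toL)
        = (dCn n).map toL * g := hg1
    have h0L : (0 : Matrix Unit Unit PolyU).map toL = 0 := by
      ext i j; simp [toL]
    rw [h0L, Matrix.mul_zero] at hg1'
    have key : ∀ i : Fin 5, LaurentPolynomial.T ((n : ℤ)) * g i () = 0 → g i () = 0 := by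
      intro i h
      calc g i () = LaurentPolynomial.T (-(n : ℤ)) *
            (LaurentPolynomial.T ((n : ℤ)) * g i ()) := by
              rw [← mul_assoc, ← LaurentPolynomial.T_add]; simp
        _ = 0 := by rw [h, mul_zero]
    have hg0 : g 0 () = 0 := by
      apply key
      have h1 := congrFun (congrFun hg1'.symm 1) ()
      simpa [dCn, toL, Matrix.mul_apply, Fin.sum_univ_five, Matrix.map_apply,
        Matrix.vecHead, Matrix.vecTail] using h1
    have hg2 : g 2 () = 0 := by
      apply key
      have h1 := congrFun (congrFun hg1'.symm 3) ()
      simpa [dCn, toL, Matrix.mul_apply, Fin.sum_univ_five, Matrix.map_apply,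
        Matrix.vecHead, Matrix.vecTail] using h1
    -- but `f ∘ g ≃ 1` on `C_O` forces `1 = 0` in `F₂[U,U⁻¹]`
    obtain ⟨K₀, hK⟩ := hfg
    let K : Matrix Unit Unit Laur := K₀
    have hK' : f.map toL * g + 1
        = ((0 : Matrix Unit Unit PolyU).map toL) * K + K * ((0 : Matrix Unit Unit PolyU).map toL) := hK
    rw [h0L, Matrix.mul_zero, Matrix.zero_mul, add_zero] at hK'
    have h1 := congrFun (congrFun hK' ()) ()
    simp only [Matrix.add_apply, Matrix.mul_apply, Fin.sum_univ_five,
      Matrix.map_apply, Matrix.one_apply_eq, Matrix.zero_apply] at h1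
    rw [hf1, hf3, hf4, hg0, hg2] at h1
    simp [toL] at h1
  exact ⟨hup, hdown, hup, fun h => hdown h.2⟩


end
end

section
/- Let C be a bigraded chain complex of finitely generated free modules over F₂[U,V], and let ι : C → C be a skew-graded chain homotopy equivalence that is F₂[U,V]-skew-linear (ι(U·m) = V·ι(m) and ι(V·m) = U·ι(m)). Let Φ and Ψ denote the formal derivatives of the differential of C with respect to U and V respectively (chain maps, well defined up to homotopy). If Φι ≃ ιΨ and ι² ≃ id + ΦΨ up to chain homotopy, then Ψ ≃ ιΦι up to chain homotopy. -/
/-!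
**Statement 16.**  Complexes over `F₂[U,V]` and the identity `Ψ ≃ ιΦι`.

A bigraded chain complex of finitely generated free `F₂[U,V]`-modules is
presented by a finite homogeneous basis `idx` with bidegrees `gr` and a
differential matrix `d` over `F₂[U,V]` (columns map to columns; matrix
multiplication is composition).  The variable `U = X 0` has bidegree
`(−1,−2)` and `V = X 1` has bidegree `(1,−2)`; the differential has bidegree
`(0,−1)`.  An `F₂[U,V]`-skew-linear map `ι` (i.e. `ι(U·m) = V·ι(m)` and
`ι(V·m) = U·ι(m)`) is recorded by a matrix `ι` acting by
`v ↦ ι · (UVswap v)`, where `UVswap` exchanges the two variables. -/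

open Matrix

noncomputable section

/-- The ring `F₂[U, V]`. -/
abbrev PolyUV : Type := MvPolynomial (Fin 2) F2

/-- The ring involution of `F₂[U,V]` exchanging `U` and `V`. -/
def UVswap : PolyUV → PolyUV :=
  fun p => MvPolynomial.rename (Equiv.swap (0 : Fin 2) 1) p

/-- Data of a bigraded complex of finitely generated free `F₂[U,V]`-modules. -/
structure UVCx where
  idx : Type
  [fintype_idx : Fintype idx]
  [dec_idx : DecidableEq idx]
  gr : idx → ℤ × ℤ
  d : Matrix idx idx PolyUV

attribute [instance] UVCx.fintype_idx UVCx.dec_idx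

/-- The coefficient of the monomial `U^k V^l`. -/
def uvCoeff (k l : ℕ) (p : PolyUV) : F2 :=
  MvPolynomial.coeff (Finsupp.single 0 k + Finsupp.single 1 l) p

/-- A matrix over `F₂[U,V]` is homogeneous of bidegree `δ`. -/
def UVGraded (C : UVCx) (δ : ℤ × ℤ) (f : Matrix C.idx C.idx PolyUV) : Prop :=
  ∀ (i j : C.idx) (k l : ℕ), uvCoeff k l (f i j) ≠ 0 →
    C.gr i + (-(k : ℤ) + (l : ℤ), -2 * (k : ℤ) - 2 * (l : ℤ)) = C.gr j + δ

/-- A matrix over `F₂[U,V]` is skew-graded: nonzero terms relate bidegree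
`(A, M)` to `(−A, M)`. -/
def UVSkewGraded (C : UVCx) (f : Matrix C.idx C.idx PolyUV) : Prop :=
  ∀ (i j : C.idx) (k l : ℕ), uvCoeff k l (f i j) ≠ 0 →
    C.gr i + (-(k : ℤ) + (l : ℤ), -2 * (k : ℤ) - 2 * (l : ℤ)) = skew (C.gr j)

/-- `Φ`, the formal derivative of the differential with respect to `U`,
computed entrywise in the chosen basis. -/
def UVPhi (C : UVCx) : Matrix C.idx C.idx PolyUV :=
  fun i j => MvPolynomial.pderiv (0 : Fin 2) (C.d i j)

/-- `Ψ`, the formal derivative of the differential with respect to `V`. -/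
def UVPsi (C : UVCx) : Matrix C.idx C.idx PolyUV :=
  fun i j => MvPolynomial.pderiv (1 : Fin 2) (C.d i j)

/-- Chain homotopy between `F₂[U,V]`-linear chain maps. -/
def UVHomotopic (C : UVCx) (f g : Matrix C.idx C.idx PolyUV) : Prop :=
  ∃ H : Matrix C.idx C.idx PolyUV, f + g = C.d * H + H * C.d

/-- Chain homotopy between skew-linear chain maps (the homotopy is itself
skew-linear, recorded by a matrix acting through `UVswap`). -/
def UVSkewHomotopic (C : UVCx) (f g : Matrix C.idx C.idx PolyUV) : Prop :=
  ∃ H : Matrix C.idx C.idx PolyUV, f + g = C.d * H + H * C.d.map UVswap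


/-! ### Auxiliary machinery -/

open MvPolynomial in
/-- `UVswap` as a ring homomorphism. -/
def swapHom : PolyUV →+* PolyUV :=
  (MvPolynomial.rename (Equiv.swap (0 : Fin 2) 1)).toRingHom

lemma UVswap_eq : UVswap = ⇑swapHom := rfl

open MvPolynomial in
lemma UVswap_swap (p : PolyUV) : UVswap (UVswap p) = p := by
  simp [UVswap, rename_rename]
  rw [show ((Equiv.swap (0:Fin 2) 1) ∘ (Equiv.swap (0:Fin 2) 1)) = id by ext x; simp, rename_id]
  rfl

/-- Substitution `U ↦ U`, `V ↦ V + t`, used to extract divided derivatives in `V`. -/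
def eV : PolyUV →+* Polynomial PolyUV :=
  (MvPolynomial.aeval fun i : Fin 2 =>
    if i = 0 then Polynomial.C (MvPolynomial.X 0)
    else Polynomial.C (MvPolynomial.X 1) + Polynomial.X).toRingHom

open MvPolynomial in
lemma eV_coeff_zero (p : PolyUV) : (eV p).coeff 0 = p := by
  induction p using MvPolynomial.induction_on with
  | C a => simp [eV, MvPolynomial.algebraMap_eq]
  | add p q hp hq => simp [map_add, hp, hq]
  | mul_X p n h =>
    rw [_root_.map_mul, Polynomial.mul_coeff_zero, h]
    fin_cases n <;> simp [eV]

open MvPolynomial in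
lemma eV_coeff_one (p : PolyUV) : (eV p).coeff 1 = pderiv (1 : Fin 2) p := by
  induction p using MvPolynomial.induction_on with
  | C a => simp [eV, MvPolynomial.algebraMap_eq]
  | add p q hp hq => simp [map_add, hp, hq]
  | mul_X p n h =>
    rw [_root_.map_mul, Polynomial.coeff_mul]
    rw [show Finset.HasAntidiagonal.antidiagonal (1:ℕ) = {(0,1),(1,0)} from rfl]
    rw [Finset.sum_insert (by decide), Finset.sum_singleton]
    simp only [eV_coeff_zero, h, pderiv_mul]
    fin_cases n <;> simp [eV, pderiv_X, mul_comm, add_comm]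

section Mats
variable {n : Type} [Fintype n] [DecidableEq n]

set_option linter.unusedSectionVars false

lemma Madd_self (A : Matrix n n PolyUV) : A + A = 0 :=
  Matrix.ext fun a b => CharTwo.add_self_eq_zero (A a b)

lemma Msmul2 (A : Matrix n n PolyUV) : (2:ℕ) • A = 0 := by
  rw [two_smul]; exact Madd_self A

lemma Msmul2' (A : Matrix n n PolyUV) : (2:ℤ) • A = 0 := by
  rw [two_smul]; exact Madd_self A

lemma Meq_of_add {A B : Matrix n n PolyUV} (h : A + B = 0) : A = B := by
  have h2 : A + (B + B) = B := by rw [← add_assoc, h, zero_add]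
  rwa [Madd_self, add_zero] at h2

lemma sum_zero {A B : Matrix n n PolyUV} (h : A = B) : A + B = 0 := by
  rw [h]; exact Madd_self B

lemma Mmap_mul (A B : Matrix n n PolyUV) :
    (A * B).map UVswap = A.map UVswap * B.map UVswap := by
  rw [UVswap_eq]; exact Matrix.map_mul

lemma Mmap_add (A B : Matrix n n PolyUV) :
    (A + B).map UVswap = A.map UVswap + B.map UVswap :=
  Matrix.ext fun a b => map_add swapHom _ _

lemma Mmap_map (A : Matrix n n PolyUV) : (A.map UVswap).map UVswap = A :=
  Matrix.ext fun a b => UVswap_swap _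

end Mats

open MvPolynomial in
lemma deriv_anticomm (C : UVCx) (hd2 : C.d * C.d = 0) (i : Fin 2) :
    (Matrix.of fun a b => pderiv i (C.d a b)) * C.d
      + C.d * (Matrix.of fun a b => pderiv i (C.d a b)) = 0 := by
  refine Matrix.ext fun a b => ?_
  have h : (pderiv i) ((C.d * C.d) a b) = 0 := by rw [hd2]; simp
  rw [Matrix.mul_apply, map_sum] at h
  simp only [pderiv_mul] at h
  rw [Finset.sum_add_distrib] at h
  simp only [Matrix.add_apply, Matrix.mul_apply, Matrix.zero_apply, Matrix.of_apply]
  linear_combination h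

open MvPolynomial in
lemma psi_sq (C : UVCx) (hd2 : C.d * C.d = 0) :
    ∃ B : Matrix C.idx C.idx PolyUV, UVPsi C * UVPsi C = C.d * B + B * C.d := by
  refine ⟨fun a b => (eV (C.d a b)).coeff 2, Meq_of_add (Matrix.ext fun a b => ?_)⟩
  have h : Polynomial.coeff (eV ((C.d * C.d) a b)) 2 = 0 := by rw [hd2]; simp
  rw [Matrix.mul_apply, map_sum, Polynomial.finset_sum_coeff] at h
  have expand : ∀ k, (eV (C.d a k * C.d k b)).coeff 2 =
      C.d a k * (eV (C.d k b)).coeff 2 + UVPsi C a k * UVPsi C k b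
        + (eV (C.d a k)).coeff 2 * C.d k b := by
    intro k
    rw [_root_.map_mul, Polynomial.coeff_mul]
    rw [show Finset.HasAntidiagonal.antidiagonal (2:ℕ) = {(0,2),(1,1),(2,0)} from rfl]
    rw [Finset.sum_insert (by decide), Finset.sum_insert (by decide), Finset.sum_singleton]
    simp only [eV_coeff_zero, eV_coeff_one, UVPsi]
    ring
  simp only [expand] at h
  rw [Finset.sum_add_distrib, Finset.sum_add_distrib] at h
  simp only [Matrix.add_apply, Matrix.mul_apply, Matrix.zero_apply]
  erw [Matrix.mul_apply, Matrix.mul_apply]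
  linear_combination h

/-- Let `C` be a bigraded chain complex of finitely
generated free `F₂[U,V]`-modules and let `ι : C → C` be a skew-graded,
`F₂[U,V]`-skew-linear chain homotopy equivalence.  If `Φι ≃ ιΨ` and
`ι² ≃ id + ΦΨ` up to chain homotopy, then `Ψ ≃ ιΦι` up to chain homotopy.
(In matrix form, the composite `ιΦι` of the skew-linear map `ι` with the
linear map `Φ` and `ι` again is the linear map `ι · (Φ·ι)^{swap}`.) -/
theorem Psi_homotopic_iota_Phi_iota (C : UVCx)
    (hd2 : C.d * C.d = 0) (hdgr : UVGraded C (0, -1) C.d)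
    (iota : Matrix C.idx C.idx PolyUV)
    (hskew : UVSkewGraded C iota)
    (hchain : iota * C.d.map UVswap = C.d * iota)
    (hequiv : ∃ kappa : Matrix C.idx C.idx PolyUV,
      kappa * C.d.map UVswap = C.d * kappa ∧
      UVHomotopic C (iota * kappa.map UVswap) 1 ∧
      UVHomotopic C (kappa * iota.map UVswap) 1)
    (hPhiIota : UVSkewHomotopic C (UVPhi C * iota) (iota * (UVPsi C).map UVswap))
    (hIotaSq : UVHomotopic C (iota * iota.map UVswap) (1 + UVPhi C * UVPsi C)) :
    UVHomotopic C (UVPsi C) (iota * (UVPhi C * iota).map UVswap) := by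
  classical
  obtain ⟨K, hK⟩ := hPhiIota
  obtain ⟨L, hL⟩ := hIotaSq
  obtain ⟨B, hB⟩ := psi_sq C hd2
  have hΦd : UVPhi C * C.d = C.d * UVPhi C := Meq_of_add (deriv_anticomm C hd2 0)
  have hΨd : UVPsi C * C.d = C.d * UVPsi C := Meq_of_add (deriv_anticomm C hd2 1)
  set Φ := UVPhi C with hΦdef
  set Ψ := UVPsi C with hΨdef
  have hK' : Φ.map UVswap * iota.map UVswap + iota.map UVswap * Ψ
      = C.d.map UVswap * K.map UVswap + K.map UVswap * C.d := by
    have h := congrArg (fun M => M.map UVswap) hK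
    simpa only [Mmap_add, Mmap_mul, Mmap_map] using h
  have h1 := congrArg (fun M => iota * M) hK'
  simp only [mul_add] at h1
  rw [← mul_assoc iota (C.d.map UVswap) (K.map UVswap), hchain, mul_assoc] at h1
  have h2 := congrArg (fun M => M * Ψ) hL
  simp only [add_mul, one_mul, mul_assoc] at h2
  rw [← hΨd] at h2
  have h3 := congrArg (fun M => Φ * M) hB
  simp only [mul_add] at h3
  rw [← mul_assoc Φ C.d B, hΦd, mul_assoc] at h3
  refine ⟨iota * K.map UVswap + L * Ψ + Φ * B, Meq_of_add ?_⟩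
  simp only [Mmap_mul, mul_add, add_mul, mul_assoc]
  have z := congrArg₂ (· + ·) (congrArg₂ (· + ·) (sum_zero h1) (sum_zero h2)) (sum_zero h3)
  simp only [add_zero] at z
  rw [← z]
  abel_nf
  simp only [Msmul2, Msmul2', add_zero, zero_add]
  try rfl
  try abel


end
end

section
/- Let C be a bigraded chain complex of finitely generated free modules over F₂[U] with F₂[U]-linear differential ∂ satisfying ∂² = 0, and let Φ be the formal derivative of ∂ with respect to U computed in a chosen F₂[U]-basis. Then Φ commutes with ∂ (so Φ is a chain map), and Φ² is chain homotopic to 0. -/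
/-!
Algebraic model for horizontal almost `ι_K`-complexes (Kang–Park,
"Torsion in the knot concordance group and cabling").

Conventions.  We work over `F₂ = ℤ/2`.  A bigraded chain complex of finitely
generated free `F₂[U]`-modules is presented by a finite homogeneous basis
`idx`, a bidegree function `gr : idx → ℤ × ℤ` (Alexander and Maslov gradings),
and a differential matrix `d` over `F₂[U]` (the `j`-th basis vector is sent to
`∑ i, d i j • eᵢ`; matrix multiplication is composition).  The variable `U`
has bidegree `(−1, −2)` and the differential has bidegree `(0, −1)`.
-/

open Polynomial Matrix Kronecker

noncomputable section

/-- Let `C` be a bigraded chain complex of finitely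
generated free `F₂[U]`-modules with `∂² = 0`, and let `Φ` be the formal
derivative of `∂` with respect to `U`, computed entrywise in the chosen
basis.  Then `Φ` commutes with `∂` (so `Φ` is a chain map), and `Φ²` is
chain homotopic to `0`. -/
theorem Phi_chain_map_and_sq_nullhomotopic (C : CxData) (hC : C.IsComplex) :
    C.Phi * C.d = C.d * C.Phi ∧ Homotopic C C (C.Phi * C.Phi) 0 := by
  have h0 : ∀ i j : C.idx, ∑ k, C.d i k * C.d k j = 0 := by
    intro i j
    have := congrFun (congrFun hC.1 i) j
    simpa [Matrix.mul_apply] using this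
  constructor
  · refine Matrix.ext fun i j => ?_
    have h1 := congrArg (derivative (R := F2)) (h0 i j)
    simp only [map_sum, derivative_mul, map_zero, Finset.sum_add_distrib] at h1
    rw [CharTwo.add_eq_iff_eq_add, zero_add] at h1
    simp only [Matrix.mul_apply, CxData.Phi]
    exact h1
  · refine ⟨Matrix.of fun i j => hasseDeriv 2 (C.d i j), ?_⟩
    refine Matrix.ext fun i j => ?_
    have h2 := congrArg (hasseDeriv (R := F2) 2) (h0 i j)
    rw [map_sum, map_zero] at h2
    simp only [hasseDeriv_mul] at h2
    have hant : (Finset.HasAntidiagonal.antidiagonal 2 : Finset (ℕ × ℕ)) = {(0,2),(1,1),(2,0)} := by decide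
    rw [hant] at h2
    rw [Finset.sum_congr rfl (fun k _ => by
      rw [Finset.sum_insert (by decide), Finset.sum_insert (by decide),
        Finset.sum_singleton])] at h2
    simp only [hasseDeriv_zero', hasseDeriv_one', Finset.sum_add_distrib] at h2
    rw [CharTwo.add_eq_iff_eq_add, zero_add] at h2
    simp only [Matrix.add_apply, Matrix.zero_apply, Matrix.mul_apply, CxData.Phi,
      Matrix.of_apply, add_zero]
    rw [h2, add_assoc, CharTwo.add_self_eq_zero, add_zero]

end
end
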